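/- Fix reals a, b > 0 and m ∈ ℝ with m² ≥ 4(a + b), and let χ be the complex 3×3 matrix with entries χ₂₃ = 1, χ₃₂ = −1 and all other entries 0. If M, Γ ∈ Matrix (Fin 3) (Fin 3) ℂ are skew-Hermitian (Mᴴ = −M, Γᴴ = −Γ) and det(λ²(a+b)·χ + λ·M + Γ − μ·1) = det(λ²(a+b)·χ + λ·m·χ + χ − μ·1) for all λ, μ ∈ ℂ, then M = m·χ and Γ = χ. -/

import Mathlib

open Matrix

/-- The matrix `χ` with `χ₂₃ = 1`, `χ₃₂ = −1` and all other entries `0`, over `ℂ`. -/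
def chiC : Matrix (Fin 3) (Fin 3) ℂ := !![0, 0, 0; 0, 0, 1; 0, -1, 0]


lemma cubic (X : Matrix (Fin 3) (Fin 3) ℂ) (μ : ℂ) :
    (X - μ • 1).det = -μ^3 + X.trace * μ^2
      - ((X.trace^2 - (X*X).trace)/2) * μ + X.det := by
  simp [Matrix.det_fin_three, Matrix.trace_fin_three, Matrix.mul_apply,
    Fin.sum_univ_three, Matrix.sub_apply, Matrix.smul_apply, Matrix.one_apply]
  ring

lemma skew_trace_sq_zero (X : Matrix (Fin 3) (Fin 3) ℂ) (hX : Xᴴ = -X)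
    (h : (X*X).trace = 0) : X = 0 := by
  have h2 : (X * Xᴴ).trace = 0 := by rw [hX]; simpa [Matrix.mul_neg] using congrArg Neg.neg h
  have h3 : ∑ i : Fin 3, ∑ j : Fin 3, Complex.normSq (X i j) = 0 := by
    have := congrArg Complex.re h2
    simpa [Matrix.trace, Matrix.diag, Matrix.mul_apply, Matrix.conjTranspose_apply,
      Fin.sum_univ_three, Complex.mul_conj, Complex.add_re, Complex.ofReal_re] using this
  have hnn : ∀ k l : Fin 3, 0 ≤ Complex.normSq (X k l) := fun k l => Complex.normSq_nonneg _
  ext i j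
  have h4 := (Finset.sum_eq_zero_iff_of_nonneg
      (fun k _ => Finset.sum_nonneg fun l _ => hnn k l)).mp h3 i (Finset.mem_univ i)
  have h5 := (Finset.sum_eq_zero_iff_of_nonneg (fun l _ => hnn i l)).mp h4 j (Finset.mem_univ j)
  simpa using Complex.normSq_eq_zero.mp h5

lemma extract (X Y : Matrix (Fin 3) (Fin 3) ℂ)
    (h : ∀ μ : ℂ, (X - μ•1).det = (Y - μ•1).det) :
    X.trace = Y.trace ∧ (X*X).trace = (Y*Y).trace := by
  have g : ∀ μ:ℂ, -μ^3 + X.trace*μ^2 - ((X.trace^2 - (X*X).trace)/2)*μ + X.det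
      = -μ^3 + Y.trace*μ^2 - ((Y.trace^2 - (Y*Y).trace)/2)*μ + Y.det :=
    fun μ => (cubic X μ).symm.trans ((h μ).trans (cubic Y μ))
  have h0 := g 0
  have h1 := g 1
  have h2 := g (-1)
  have ht : X.trace = Y.trace := by linear_combination (h1 + h2)/2 - h0
  exact ⟨ht, by linear_combination h1 - h2 + (X.trace + Y.trace) * ht⟩



/-- Isospectral rigidity for the sleeping Lagrange top: if
`m² ≥ 4(a + b)` and the pencil `λ²(a+b)χ + λM + Γ` with `M, Γ` skew-Hermitian is
isospectral with the equilibrium pencil `λ²(a+b)χ + λmχ + χ`, then `M = mχ` and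
`Γ = χ`. -/
theorem statement11 (a b m : ℝ) (ha : 0 < a) (hb : 0 < b)
    (hm : m ^ 2 ≥ 4 * (a + b))
    (M Γ : Matrix (Fin 3) (Fin 3) ℂ) (hM : Mᴴ = -M) (hΓ : Γᴴ = -Γ)
    (hiso : ∀ lam μ : ℂ,
      (lam ^ 2 • (((a : ℂ) + (b : ℂ)) • chiC) + lam • M + Γ - μ • 1).det
        = (lam ^ 2 • (((a : ℂ) + (b : ℂ)) • chiC) + lam • ((m : ℂ) • chiC) + chiC
            - μ • 1).det) :
    M = (m : ℂ) • chiC ∧ Γ = chiC := by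
  have hab : (0:ℝ) < a + b := by linarith
  have hdisc : (0:ℝ) ≤ m^2 - 4*(a+b) := by linarith
  obtain ⟨l0, hroot⟩ : ∃ l0 : ℝ, (a+b) * l0^2 + m * l0 + 1 = 0 := by
    refine ⟨(-m + Real.sqrt (m^2 - 4*(a+b))) / (2*(a+b)), ?_⟩
    have hsq : Real.sqrt (m^2 - 4*(a+b)) ^ 2 = m^2 - 4*(a+b) := Real.sq_sqrt hdisc
    have hne : (2*(a+b)) ≠ 0 := by positivity
    field_simp
    have hsq' : Real.sqrt (m^2 - (a+b)*4) ^ 2 = m^2 - (a+b)*4 := by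
      rw [show m^2 - (a+b)*4 = m^2 - 4*(a+b) by ring]; exact hsq
    nlinarith [hsq']
  have hrootC : ((a:ℂ)+(b:ℂ)) * (l0:ℂ)^2 + (m:ℂ) * (l0:ℂ) + 1 = 0 := by
    have := congrArg (fun x : ℝ => (x:ℂ)) hroot
    push_cast at this
    linear_combination this
  have hchi : chiCᴴ = -chiC := by
    ext i j
    fin_cases i <;> fin_cases j <;>
      simp [chiC, Matrix.conjTranspose_apply, Matrix.neg_apply, Matrix.vecHead, Matrix.vecTail]
  -- trace-square identity from isospectrality
  have hYs : ∀ lam : ℂ,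
      ((lam ^ 2 • (((a : ℂ) + (b : ℂ)) • chiC) + lam • ((m : ℂ) • chiC) + chiC)
        * (lam ^ 2 • (((a : ℂ) + (b : ℂ)) • chiC) + lam • ((m : ℂ) • chiC) + chiC)).trace
      = -2*(((a:ℂ)+(b:ℂ))*lam^2 + (m:ℂ)*lam + 1)^2 := by
    intro lam
    simp [chiC, Matrix.trace_fin_three, Matrix.mul_apply, Matrix.vecMul, dotProduct,
      Fin.sum_univ_three, Matrix.add_apply, Matrix.sub_apply, Matrix.smul_apply,
      Matrix.neg_apply, Matrix.vecHead, Matrix.vecTail]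
    ring
  have hS : ∀ lam : ℂ,
      ((lam ^ 2 • (((a : ℂ) + (b : ℂ)) • chiC) + lam • M + Γ)
        * (lam ^ 2 • (((a : ℂ) + (b : ℂ)) • chiC) + lam • M + Γ)).trace
      = -2*(((a:ℂ)+(b:ℂ))*lam^2 + (m:ℂ)*lam + 1)^2 :=
    fun lam => ((extract _ _ (hiso lam)).2).trans (hYs lam)
  -- expansion of the trace-square in lam
  have hSexp : ∀ lam : ℂ,
      ((lam ^ 2 • (((a : ℂ) + (b : ℂ)) • chiC) + lam • M + Γ)
        * (lam ^ 2 • (((a : ℂ) + (b : ℂ)) • chiC) + lam • M + Γ)).trace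
      = -2*((a:ℂ)+(b:ℂ))^2*lam^4 + 2*((a:ℂ)+(b:ℂ))*(chiC*M).trace*lam^3
        + ((M*M).trace + 2*((a:ℂ)+(b:ℂ))*(chiC*Γ).trace)*lam^2
        + 2*(M*Γ).trace*lam + (Γ*Γ).trace := by
    intro lam
    simp [chiC, Matrix.trace_fin_three, Matrix.mul_apply, Matrix.vecMul, dotProduct,
      Fin.sum_univ_three, Matrix.add_apply, Matrix.sub_apply, Matrix.smul_apply,
      Matrix.neg_apply, Matrix.vecHead, Matrix.vecTail]
    ring
  have hP : ∀ lam : ℂ,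
      -2*((a:ℂ)+(b:ℂ))^2*lam^4 + 2*((a:ℂ)+(b:ℂ))*(chiC*M).trace*lam^3
        + ((M*M).trace + 2*((a:ℂ)+(b:ℂ))*(chiC*Γ).trace)*lam^2
        + 2*(M*Γ).trace*lam + (Γ*Γ).trace
      = -2*(((a:ℂ)+(b:ℂ))*lam^2 + (m:ℂ)*lam + 1)^2 :=
    fun lam => (hSexp lam).symm.trans (hS lam)
  have e0 := hP 0
  have e1 := hP 1
  have e2 := hP (-1)
  have e3 := hP 2
  have e4 := hP (-2)
  have hcne : ((a:ℂ)+(b:ℂ)) ≠ 0 := by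
    have h1 : ((a:ℝ)+b) ≠ 0 := ne_of_gt hab
    have h2 : (((a+b:ℝ)):ℂ) ≠ 0 := Complex.ofReal_ne_zero.mpr h1
    push_cast at h2
    exact h2
  have hu : (chiC*M).trace = -2*(m:ℂ) := by
    have hcu : ((a:ℂ)+(b:ℂ)) * ((chiC*M).trace + 2*(m:ℂ)) = 0 := by
      linear_combination (e3 - e4)/24 - (e1 - e2)/12
    rcases mul_eq_zero.mp hcu with h | h
    · exact absurd h hcne
    · linear_combination h
  have hp : (M*M).trace + 2*((a:ℂ)+(b:ℂ))*(chiC*Γ).trace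
      = -2*(m:ℂ)^2 - 4*((a:ℂ)+(b:ℂ)) := by
    linear_combination (e1 + e2)/2 - e0
  -- A(l0) = 0
  have hXH : ((l0:ℂ) ^ 2 • (((a : ℂ) + (b : ℂ)) • chiC) + (l0:ℂ) • M + Γ)ᴴ
      = -((l0:ℂ) ^ 2 • (((a : ℂ) + (b : ℂ)) • chiC) + (l0:ℂ) • M + Γ) := by
    simp [Matrix.conjTranspose_add, Matrix.conjTranspose_smul, hM, hΓ, hchi,
      Complex.star_def, map_add, map_pow, Complex.conj_ofReal]
    module
  have hS0 : (((l0:ℂ) ^ 2 • (((a : ℂ) + (b : ℂ)) • chiC) + (l0:ℂ) • M + Γ)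
        * ((l0:ℂ) ^ 2 • (((a : ℂ) + (b : ℂ)) • chiC) + (l0:ℂ) • M + Γ)).trace = 0 := by
    rw [hS (l0:ℂ), hrootC]
    ring
  have hA0 : (l0:ℂ) ^ 2 • (((a : ℂ) + (b : ℂ)) • chiC) + (l0:ℂ) • M + Γ = 0 :=
    skew_trace_sq_zero _ hXH hS0
  have hΓeq : Γ = -((l0:ℂ) ^ 2 • (((a : ℂ) + (b : ℂ)) • chiC) + (l0:ℂ) • M) :=
    eq_neg_of_add_eq_zero_right hA0
  -- w = tr(χΓ) = -2
  have hw1 : (chiC*Γ).trace = (l0:ℂ)^2*((a:ℂ)+(b:ℂ))*2 - (l0:ℂ)*(chiC*M).trace := by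
    rw [hΓeq]
    simp [chiC, Matrix.trace_fin_three, Matrix.mul_apply, Matrix.vecMul, dotProduct,
      Fin.sum_univ_three, Matrix.add_apply, Matrix.sub_apply, Matrix.smul_apply,
      Matrix.neg_apply, Matrix.vecHead, Matrix.vecTail]
    ring
  have hw : (chiC*Γ).trace = -2 := by
    rw [hw1, hu]
    linear_combination 2*hrootC
  have hv : (M*M).trace = -2*(m:ℂ)^2 := by
    linear_combination hp - 2*((a:ℂ)+(b:ℂ))*hw
  -- M = mχ
  have hgH : (M - (m:ℂ) • chiC)ᴴ = -(M - (m:ℂ) • chiC) := by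
    simp [Matrix.conjTranspose_sub, Matrix.conjTranspose_smul, hM, hchi,
      Complex.star_def, Complex.conj_ofReal]
    module
  have hgs : ((M - (m:ℂ) • chiC) * (M - (m:ℂ) • chiC)).trace
      = (M*M).trace - 2*(m:ℂ)*(chiC*M).trace - 2*(m:ℂ)^2 := by
    simp [chiC, Matrix.trace_fin_three, Matrix.mul_apply, Matrix.vecMul, dotProduct,
      Fin.sum_univ_three, Matrix.add_apply, Matrix.sub_apply, Matrix.smul_apply,
      Matrix.neg_apply, Matrix.vecHead, Matrix.vecTail]
    ring
  have hg0 : ((M - (m:ℂ) • chiC) * (M - (m:ℂ) • chiC)).trace = 0 := by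
    rw [hgs, hv, hu]; ring
  have hMeq : M = (m:ℂ) • chiC := by
    have := skew_trace_sq_zero _ hgH hg0
    rwa [sub_eq_zero] at this
  refine ⟨hMeq, ?_⟩
  rw [hΓeq, hMeq]
  have hfac : (-((l0:ℂ)^2*((a:ℂ)+(b:ℂ)) + (l0:ℂ)*(m:ℂ))) = 1 := by
    linear_combination -hrootC
  calc -((l0:ℂ) ^ 2 • (((a : ℂ) + (b : ℂ)) • chiC) + (l0:ℂ) • ((m:ℂ) • chiC))
      = (-((l0:ℂ)^2*((a:ℂ)+(b:ℂ)) + (l0:ℂ)*(m:ℂ))) • chiC := by module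
    _ = chiC := by rw [hfac, one_smul]
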